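/- Let n ≥ 1, 0 ≤ β < α ≤ 1, let b be an integer with 1 ≤ b ≤ n and k an integer with 1 ≤ k ≤ n/b. The baseline factorizations of A_{α,β} satisfy: (i) 𝓔(A_{α,β}, Id) = (1/√n)·sens_{k,b}(Id)·‖A_{α,β}‖_F is at least √(n·k/2) if α = 1, and at least √k if α < 1; (ii) 𝓔(Id, A_{α,β}) = (1/√n)·sens_{k,b}(A_{α,β})·‖Id‖_F is at least k·√n/√3 if α = 1, and at least √k if α < 1. -/

import Mathlib

open Finset Matrix

/-- `a_m = Σ_{t=0}^{m} α^t β^{m−t}`. -/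
noncomputable def aCoef (α β : ℝ) (m : ℕ) : ℝ :=
  ∑ t ∈ Finset.range (m + 1), α ^ t * β ^ (m - t)

/-- The SGD workload matrix `A_{α,β}`. -/
noncomputable def Amat (n : ℕ) (α β : ℝ) : Matrix (Fin n) (Fin n) ℝ :=
  Matrix.of fun i j => if (j : ℕ) ≤ (i : ℕ) then aCoef α β ((i : ℕ) - (j : ℕ)) else 0

/-- The `b`-min-separated `L2`-sensitivity with at most `k` participations. -/
noncomputable def sens (n b k : ℕ) (C : Matrix (Fin n) (Fin n) ℝ) : ℝ :=
  Real.sqrt (sSup { x : ℝ | ∃ π : Finset (Fin n), π.card ≤ k ∧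
    (∀ i ∈ π, ∀ j ∈ π, i ≠ j → b ≤ Nat.dist (i : ℕ) (j : ℕ)) ∧
    x = ∑ i ∈ π, ∑ j ∈ π, (Cᵀ * C) i j })

/-- The Frobenius norm. -/
noncomputable def frob (n : ℕ) (C : Matrix (Fin n) (Fin n) ℝ) : ℝ :=
  Real.sqrt (∑ i : Fin n, ∑ j : Fin n, (C i j) ^ 2)

lemma aCoef_zero (α β : ℝ) : aCoef α β 0 = 1 := by simp [aCoef]

lemma aCoef_nonneg {α β : ℝ} (hα : 0 ≤ α) (hβ : 0 ≤ β) (m : ℕ) : 0 ≤ aCoef α β m := by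
  unfold aCoef; positivity

lemma one_le_aCoef {β : ℝ} (hβ : 0 ≤ β) (m : ℕ) : 1 ≤ aCoef 1 β m := by
  have h : ((1:ℝ) ^ m * β ^ (m - m)) ≤ aCoef 1 β m := by
    apply Finset.single_le_sum (f := fun t => (1:ℝ) ^ t * β ^ (m - t))
    · intro t _; positivity
    · simp
  simpa using h

lemma Amat_nonneg {n : ℕ} {α β : ℝ} (hα : 0 ≤ α) (hβ : 0 ≤ β) (i j : Fin n) :
    0 ≤ Amat n α β i j := by
  unfold Amat
  simp only [Matrix.of_apply]
  split
  · exact aCoef_nonneg hα hβ _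
  · exact le_refl _

lemma Amat_diag {n : ℕ} (α β : ℝ) (i : Fin n) : Amat n α β i i = 1 := by
  simp [Amat, aCoef_zero]

lemma le_sens {n : ℕ} (b k : ℕ) (C : Matrix (Fin n) (Fin n) ℝ) (π : Finset (Fin n))
    (h1 : π.card ≤ k) (h2 : ∀ i ∈ π, ∀ j ∈ π, i ≠ j → b ≤ Nat.dist (i : ℕ) (j : ℕ)) :
    Real.sqrt (∑ i ∈ π, ∑ j ∈ π, (Cᵀ * C) i j) ≤ sens n b k C := by
  apply Real.sqrt_le_sqrt
  apply le_csSup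
  · apply Set.Finite.bddAbove
    apply Set.Finite.subset
      (Set.finite_range (fun π : Finset (Fin n) => ∑ i ∈ π, ∑ j ∈ π, (Cᵀ * C) i j))
    rintro x ⟨π, -, -, rfl⟩
    exact ⟨π, rfl⟩
  · exact ⟨π, h1, h2, rfl⟩

lemma sqrt_helper {n : ℕ} (hn : 1 ≤ n) {s f p q x : ℝ} (hp : 0 ≤ p) (hq : 0 ≤ q)
    (hs : Real.sqrt p ≤ s) (hf : Real.sqrt q ≤ f) (hx : x * n ≤ p * q) :
    Real.sqrt x ≤ (1 / Real.sqrt n) * s * f := by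
  have hn0 : (0:ℝ) < n := by exact_mod_cast hn
  have h1 : x ≤ p * q / n := by rw [le_div_iff₀ hn0]; exact hx
  have h2 : Real.sqrt x ≤ Real.sqrt (p * q / n) := Real.sqrt_le_sqrt h1
  have h3 : Real.sqrt (p * q / n) = (1 / Real.sqrt n) * Real.sqrt p * Real.sqrt q := by
    rw [Real.sqrt_div (by positivity), Real.sqrt_mul hp]; ring
  rw [h3] at h2
  refine h2.trans ?_
  have hsn : (0:ℝ) ≤ 1 / Real.sqrt n := by positivity
  have hmul : Real.sqrt p * Real.sqrt q ≤ s * f :=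
    mul_le_mul hs hf (Real.sqrt_nonneg q) ((Real.sqrt_nonneg p).trans hs)
  calc 1 / Real.sqrt n * Real.sqrt p * Real.sqrt q
      = 1 / Real.sqrt n * (Real.sqrt p * Real.sqrt q) := by ring
    _ ≤ 1 / Real.sqrt n * (s * f) := mul_le_mul_of_nonneg_left hmul hsn
    _ = 1 / Real.sqrt n * s * f := by ring

lemma block_sum (b : ℕ) (hb : 0 < b) (f : ℕ → ℕ) (k : ℕ) :
    ∑ l ∈ Finset.range (k * b), f (l / b) = b * ∑ j ∈ Finset.range k, f j := by
  induction k with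
  | zero => simp
  | succ k ih =>
    have hsp : ∑ l ∈ Finset.range ((k+1) * b), f (l / b)
        = ∑ l ∈ Finset.range (k * b), f (l / b) + ∑ l ∈ Finset.Ico (k*b) ((k+1)*b), f (l / b) := by
      simp only [Finset.range_eq_Ico]
      exact (Finset.sum_Ico_consecutive _ (Nat.zero_le _)
        (Nat.mul_le_mul_right b (Nat.le_succ k))).symm
    have hval : ∀ l ∈ Finset.Ico (k*b) ((k+1)*b), f (l / b) = f k := by
      intro l hl
      rw [Finset.mem_Ico] at hl
      rw [Nat.div_eq_of_lt_le hl.1 hl.2]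
    rw [hsp, ih, Finset.sum_congr rfl hval, Finset.sum_const, Nat.card_Ico,
      Finset.sum_range_succ, smul_eq_mul]
    have h : (k+1)*b - k*b = b := by rw [Nat.succ_mul]; omega
    rw [h]
    ring

lemma square_sum_bound (k : ℕ) : k^3 ≤ 3 * ∑ j ∈ Finset.range k, (j+1)^2 := by
  induction k with
  | zero => simp
  | succ k ih =>
    rw [Finset.sum_range_succ, Nat.mul_add]
    have h : (k+1)^3 ≤ k^3 + 3*(k+1)^2 := by ring_nf; linarith [sq_nonneg k]
    omega

lemma nat_bound (n b k : ℕ) (hb : 0 < b) (hkb : k * b ≤ n) :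
    k^2 * n ≤ 3 * ∑ l ∈ Finset.range n, (min k (l / b + 1))^2 := by
  have hsplit : ∑ l ∈ Finset.range n, (min k (l/b+1))^2
      = ∑ l ∈ Finset.range (k*b), (min k (l/b+1))^2
        + ∑ l ∈ Finset.Ico (k*b) n, (min k (l/b+1))^2 := by
    simp only [Finset.range_eq_Ico]
    exact (Finset.sum_Ico_consecutive _ (Nat.zero_le _) hkb).symm
  have h1 : ∑ l ∈ Finset.range (k*b), (min k (l/b+1))^2
      = b * ∑ j ∈ Finset.range k, (min k (j+1))^2 :=
    block_sum b hb (fun j => (min k (j+1))^2) k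
  have h1' : ∑ j ∈ Finset.range k, (min k (j+1))^2 = ∑ j ∈ Finset.range k, (j+1)^2 := by
    refine Finset.sum_congr rfl fun j hj => ?_
    rw [Finset.mem_range] at hj
    rw [min_eq_right (by omega)]
  have h3 : ∑ l ∈ Finset.Ico (k*b) n, (min k (l/b+1))^2 = (n - k*b) * k^2 := by
    rw [Finset.sum_congr rfl (fun l hl => ?_), Finset.sum_const, Nat.card_Ico, smul_eq_mul]
    rw [Finset.mem_Ico] at hl
    have hk' : k ≤ l / b := (Nat.le_div_iff_mul_le hb).mpr hl.1
    rw [min_eq_left (by omega)]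
  have h4 := square_sum_bound k
  rw [hsplit, h1, h1', h3]
  obtain ⟨d, rfl⟩ : ∃ d, n = k*b + d := ⟨n - k*b, by omega⟩
  have hd : k*b + d - k*b = d := by omega
  rw [hd]
  nlinarith [Nat.mul_le_mul_left b h4]

theorem baseline_factorization_lower_bounds (n b k : ℕ) (hn : 1 ≤ n)
    (hb : 1 ≤ b) (hbn : b ≤ n) (hk : 1 ≤ k) (hkn : k ≤ n / b)
    (α β : ℝ) (hβ : 0 ≤ β) (hβα : β < α) (hα : α ≤ 1) :
    ((α = 1 →
        Real.sqrt ((n : ℝ) * k / 2) ≤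
          (1 / Real.sqrt n) * sens n b k (1 : Matrix (Fin n) (Fin n) ℝ) *
            frob n (Amat n α β)) ∧
      (α < 1 →
        Real.sqrt k ≤
          (1 / Real.sqrt n) * sens n b k (1 : Matrix (Fin n) (Fin n) ℝ) *
            frob n (Amat n α β))) ∧
    ((α = 1 →
        (k : ℝ) * Real.sqrt n / Real.sqrt 3 ≤
          (1 / Real.sqrt n) * sens n b k (Amat n α β) *
            frob n (1 : Matrix (Fin n) (Fin n) ℝ)) ∧
      (α < 1 →
        Real.sqrt k ≤
          (1 / Real.sqrt n) * sens n b k (Amat n α β) *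
            frob n (1 : Matrix (Fin n) (Fin n) ℝ))) := by
  have hb0 : 0 < b := hb
  have hα0 : 0 ≤ α := hβ.trans hβα.le
  have hkb : k * b ≤ n := (Nat.le_div_iff_mul_le hb0).mp hkn
  -- the min-separated index set π0 = {0, b, ..., (k-1)b}
  have hjb : ∀ j : Fin k, (j : ℕ) * b < n :=
    fun j => lt_of_lt_of_le (Nat.mul_lt_mul_of_pos_right j.isLt hb0) hkb
  set e : Fin k ↪ Fin n :=
    ⟨fun j => ⟨(j : ℕ) * b, hjb j⟩, by
      intro j1 j2 h
      have : (j1 : ℕ) * b = (j2 : ℕ) * b := congrArg Fin.val h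
      exact Fin.ext (Nat.eq_of_mul_eq_mul_right hb0 this)⟩ with he
  set π0 : Finset (Fin n) := Finset.univ.map e with hπ0
  have hcard : π0.card = k := by simp [hπ0]
  have hsep : ∀ i ∈ π0, ∀ j ∈ π0, i ≠ j → b ≤ Nat.dist (i : ℕ) (j : ℕ) := by
    intro i hi j hj hij
    rw [hπ0, Finset.mem_map] at hi hj
    obtain ⟨j1, -, rfl⟩ := hi
    obtain ⟨j2, -, rfl⟩ := hj
    have hne : (j1 : ℕ) ≠ (j2 : ℕ) := by
      intro hcc; exact hij (by apply congrArg e; exact Fin.ext hcc)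
    have : Nat.dist ((j1:ℕ)*b) ((j2:ℕ)*b) = Nat.dist (j1:ℕ) (j2:ℕ) * b := Nat.dist_mul_right _ _ _
    rw [he]
    show b ≤ Nat.dist ((j1:ℕ)*b) ((j2:ℕ)*b)
    rw [this]
    have : 1 ≤ Nat.dist (j1:ℕ) (j2:ℕ) := Nat.pos_of_ne_zero (fun h0 => hne (Nat.eq_of_dist_eq_zero h0))
    calc b = 1 * b := (one_mul b).symm
      _ ≤ Nat.dist (j1:ℕ) (j2:ℕ) * b := Nat.mul_le_mul_right b this
  -- sens of the identity ≥ √k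
  have hsensI : Real.sqrt k ≤ sens n b k (1 : Matrix (Fin n) (Fin n) ℝ) := by
    have hone : ((1 : Matrix (Fin n) (Fin n) ℝ)ᵀ * (1 : Matrix (Fin n) (Fin n) ℝ))
        = (1 : Matrix (Fin n) (Fin n) ℝ) := by simp
    have hval : ∑ i ∈ π0, ∑ j ∈ π0,
        ((1 : Matrix (Fin n) (Fin n) ℝ)ᵀ * (1 : Matrix (Fin n) (Fin n) ℝ)) i j = k := by
      rw [hone]
      have hinner : ∀ i ∈ π0, ∑ j ∈ π0, (1 : Matrix (Fin n) (Fin n) ℝ) i j = 1 := by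
        intro i hi
        simp only [Matrix.one_apply]
        rw [Finset.sum_ite_eq π0 i (fun _ => (1:ℝ))]
        simp [hi]
      rw [Finset.sum_congr rfl hinner, Finset.sum_const, hcard]
      simp
    have := le_sens b k (1 : Matrix (Fin n) (Fin n) ℝ) π0 (le_of_eq hcard) hsep
    rwa [hval] at this
  -- frobenius norm of A squared: sum of squares
  have hfrobA : frob n (Amat n α β)
      = Real.sqrt (∑ i : Fin n, ∑ j : Fin n, (Amat n α β i j)^2) := rfl
  -- frob A ≥ √n always
  have hfrobA_n : Real.sqrt n ≤ frob n (Amat n α β) := by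
    rw [hfrobA]
    apply Real.sqrt_le_sqrt
    have : (n : ℝ) = ∑ i : Fin n, (Amat n α β i i)^2 := by
      simp [Amat_diag]
    rw [this]
    apply Finset.sum_le_sum
    intro i _
    exact Finset.single_le_sum (f := fun j => (Amat n α β i j)^2)
      (fun j _ => sq_nonneg _) (Finset.mem_univ i)
  -- frob 1 = √n
  have hfrob1 : frob n (1 : Matrix (Fin n) (Fin n) ℝ) = Real.sqrt n := by
    unfold frob
    congr 1
    have : ∀ i : Fin n, ∑ j : Fin n, ((1 : Matrix (Fin n) (Fin n) ℝ) i j)^2 = 1 := by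
      intro i
      simp only [Matrix.one_apply, apply_ite (fun x : ℝ => x^2)]
      simp
    rw [Finset.sum_congr rfl (fun i _ => this i)]
    simp
  have hn0 : (0:ℝ) < n := by exact_mod_cast hn
  have hk0 : (0:ℝ) < k := by exact_mod_cast hk
  -- rewriting the sensitivity sum for A over π0
  have hAsum : ∑ i ∈ π0, ∑ j ∈ π0, ((Amat n α β)ᵀ * Amat n α β) i j
      = ∑ l : Fin n, (∑ i ∈ π0, Amat n α β l i)^2 := by
    simp only [Matrix.mul_apply, Matrix.transpose_apply]
    rw [Finset.sum_congr rfl (fun i _ => Finset.sum_comm), Finset.sum_comm]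
    refine Finset.sum_congr rfl fun l _ => ?_
    rw [sq, Finset.sum_mul_sum]
  constructor
  · constructor
    · -- (i) α = 1
      intro h1
      subst h1
      apply sqrt_helper hn (p := (k:ℝ)) (q := (n:ℝ)^2/2) (by positivity) (by positivity) hsensI
      · -- frob A ≥ √(n²/2)
        rw [hfrobA]
        apply Real.sqrt_le_sqrt
        -- lower bound entries by indicator
        have hstep1 : ∑ i : Fin n, (((i:ℕ):ℝ) + 1) ≤ ∑ i : Fin n, ∑ j : Fin n, (Amat n 1 β i j)^2 := by
          apply Finset.sum_le_sum
          intro i _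
          have hind : ∀ j : Fin n, (if (j:ℕ) ≤ (i:ℕ) then (1:ℝ) else 0) ≤ (Amat n 1 β i j)^2 := by
            intro j
            by_cases hji : (j:ℕ) ≤ (i:ℕ)
            · simp only [hji, if_true]
              have : (1:ℝ) ≤ Amat n 1 β i j := by
                unfold Amat; simp only [Matrix.of_apply, hji, if_true]
                exact one_le_aCoef hβ _
              nlinarith
            · simp only [hji, if_false]
              positivity
          calc ((i:ℕ):ℝ) + 1 = ∑ j : Fin n, (if (j:ℕ) ≤ (i:ℕ) then (1:ℝ) else 0) := by
                rw [Fin.sum_univ_eq_sum_range (fun j => if j ≤ (i:ℕ) then (1:ℝ) else 0) n,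
                  Finset.sum_boole]
                have hi := i.isLt
                have hfil : Finset.filter (fun j => j ≤ (i:ℕ)) (Finset.range n)
                    = Finset.range ((i:ℕ)+1) := by
                  ext x
                  simp only [Finset.mem_filter, Finset.mem_range]
                  omega
                rw [hfil, Finset.card_range]
                push_cast
                ring
            _ ≤ ∑ j : Fin n, (Amat n 1 β i j)^2 := Finset.sum_le_sum fun j _ => hind j
        refine le_trans ?_ hstep1
        -- ∑ (i+1) = n(n+1)/2 ≥ n²/2
        have hgauss : ∑ i : Fin n, (((i:ℕ):ℝ) + 1) = (n * (n+1) : ℕ) / 2 := by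
          rw [Fin.sum_univ_eq_sum_range (fun i => ((i:ℝ) + 1))]
          have : ∑ i ∈ Finset.range n, ((i:ℝ) + 1) = ((∑ i ∈ Finset.range n, (i + 1) : ℕ) : ℝ) := by
            push_cast
            exact Finset.sum_congr rfl fun x _ => by ring
          rw [this]
          have h2 : (∑ i ∈ Finset.range n, (i + 1)) * 2 = n * (n+1) := by
            have := Finset.sum_range_id_mul_two (n+1)
            rw [Finset.sum_range_succ'] at this
            simpa [Nat.mul_comm] using this
          rw [← h2]
          push_cast
          ring
        rw [hgauss]
        rw [div_le_div_iff₀ (by norm_num) (by norm_num)]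
        push_cast
        nlinarith
      · push_cast; nlinarith
    · -- (i) α < 1
      intro _
      apply sqrt_helper hn (p := (k:ℝ)) (q := (n:ℝ)) (by positivity) (by positivity) hsensI hfrobA_n
      nlinarith
  · constructor
    · -- (ii) α = 1
      intro h1
      subst h1
      rw [hfrob1]
      have htarget : (k:ℝ) * Real.sqrt n / Real.sqrt 3
          = Real.sqrt ((k:ℝ)^2 * n / 3) := by
        rw [Real.sqrt_div (by positivity), Real.sqrt_mul (by positivity),
          Real.sqrt_sq (by positivity)]
      rw [htarget]
      apply sqrt_helper hn (p := (k:ℝ)^2 * n / 3) (q := (n:ℝ)) (by positivity) (by positivity)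
      · -- sens A ≥ √(k²n/3)
        refine le_trans (Real.sqrt_le_sqrt ?_) (le_sens b k (Amat n 1 β) π0 (le_of_eq hcard) hsep)
        rw [hAsum]
        -- lower bound each inner sum by the count
        have hcount : ∀ l : Fin n,
            ((min k ((l:ℕ)/b + 1) : ℕ) : ℝ) ≤ ∑ i ∈ π0, Amat n 1 β l i := by
          intro l
          rw [hπ0, Finset.sum_map]
          have hterm : ∀ j : Fin k, (if (j:ℕ)*b ≤ (l:ℕ) then (1:ℝ) else 0) ≤ Amat n 1 β l (e j) := by
            intro j
            by_cases hji : (j:ℕ)*b ≤ (l:ℕ)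
            · simp only [hji, if_true]
              have : Amat n 1 β l (e j) = aCoef 1 β ((l:ℕ) - (j:ℕ)*b) := by
                rw [he]; unfold Amat
                simp only [Matrix.of_apply]
                show (if (j:ℕ)*b ≤ (l:ℕ) then aCoef 1 β ((l:ℕ) - (j:ℕ)*b) else 0) = _
                exact if_pos hji
              rw [this]
              exact one_le_aCoef hβ _
            · simp only [hji, if_false]
              exact Amat_nonneg (by norm_num) hβ _ _
          calc ((min k ((l:ℕ)/b + 1) : ℕ) : ℝ)
              = ∑ j : Fin k, (if (j:ℕ)*b ≤ (l:ℕ) then (1:ℝ) else 0) := by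
                rw [Fin.sum_univ_eq_sum_range (fun j => if j*b ≤ (l:ℕ) then (1:ℝ) else 0)]
                rw [Finset.sum_boole]
                congr 1
                have : Finset.filter (fun j => j*b ≤ (l:ℕ)) (Finset.range k)
                    = Finset.range (min k ((l:ℕ)/b + 1)) := by
                  ext j
                  simp only [Finset.mem_filter, Finset.mem_range, lt_min_iff]
                  rw [← Nat.le_div_iff_mul_le hb0]
                  omega
                rw [this, Finset.card_range]
            _ ≤ ∑ j : Fin k, Amat n 1 β l (e j) := Finset.sum_le_sum fun j _ => hterm j
        have hmono : ∑ l : Fin n, (((min k ((l:ℕ)/b + 1) : ℕ) : ℝ))^2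
            ≤ ∑ l : Fin n, (∑ i ∈ π0, Amat n 1 β l i)^2 := by
          apply Finset.sum_le_sum
          intro l _
          have h0 : (0:ℝ) ≤ ((min k ((l:ℕ)/b + 1) : ℕ) : ℝ) := by positivity
          nlinarith [hcount l]
        refine le_trans ?_ hmono
        have hcast : ∑ l : Fin n, (((min k ((l:ℕ)/b + 1) : ℕ) : ℝ))^2
            = ((∑ l ∈ Finset.range n, (min k (l/b + 1))^2 : ℕ) : ℝ) := by
          rw [Fin.sum_univ_eq_sum_range (fun l => (((min k (l/b + 1) : ℕ) : ℝ))^2)]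
          push_cast
          rfl
        rw [hcast]
        have := nat_bound n b k hb0 hkb
        have hcast2 : (k:ℝ)^2 * n ≤ 3 * ((∑ l ∈ Finset.range n, (min k (l/b + 1))^2 : ℕ) : ℝ) := by
          exact_mod_cast this
        linarith
      · exact le_refl _
      · exact le_of_eq (by ring)
    · -- (ii) α < 1
      intro _
      rw [hfrob1]
      apply sqrt_helper hn (p := (k:ℝ)) (q := (n:ℝ)) (by positivity) (by positivity)
      · -- sens A ≥ √k
        refine le_trans (Real.sqrt_le_sqrt ?_) (le_sens b k (Amat n α β) π0 (le_of_eq hcard) hsep)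
        rw [hAsum]
        have hdiag : ∀ l ∈ π0, (1:ℝ) ≤ (∑ i ∈ π0, Amat n α β l i)^2 := by
          intro l hl
          have h1 : (1:ℝ) ≤ ∑ i ∈ π0, Amat n α β l i := by
            have := Finset.single_le_sum (f := fun i => Amat n α β l i)
              (fun i _ => Amat_nonneg hα0 hβ l i) hl
            simpa [Amat_diag] using this
          nlinarith
        calc (k:ℝ) = ∑ l ∈ π0, (1:ℝ) := by rw [Finset.sum_const, hcard]; simp
          _ ≤ ∑ l ∈ π0, (∑ i ∈ π0, Amat n α β l i)^2 := Finset.sum_le_sum hdiag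
          _ ≤ ∑ l : Fin n, (∑ i ∈ π0, Amat n α β l i)^2 :=
              Finset.sum_le_sum_of_subset_of_nonneg (Finset.subset_univ _)
                (fun l _ _ => sq_nonneg _)
      · exact le_refl _
      · exact le_refl _
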